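/- Under the setup of the pathwise $\varepsilon$-approximations with pointwise limit $Y$ finite on $[0,\infty)$: the set $\{t>0 : Y(t)>0\}$ is open in $\mathbb{R}$. -/

import Mathlib

open Filter Topology MeasureTheory Set

/-- Comparison: smaller regularization parameter gives a larger solution. -/
lemma Y_comparison
    (Y₀ k a σ : ℝ) (hk : 0 < k) (ha : 0 < a)
    (g : ℝ → ℝ) (hg0 : g 0 = 0)
    (Y : ℝ → ℝ → ℝ)
    (hYc : ∀ ε : ℝ, 0 < ε → Continuous (Y ε))
    (hYeq : ∀ ε : ℝ, 0 < ε → ∀ t : ℝ, 0 ≤ t →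
      Y ε t = Y₀ + (∫ s in (0:ℝ)..t, k / ((if 0 < Y ε s then Y ε s else 0) + ε))
        - a * (∫ s in (0:ℝ)..t, Y ε s) + σ * g t)
    {ε ε' : ℝ} (hε' : 0 < ε') (hεε : ε' ≤ ε) {t : ℝ} (ht : 0 ≤ t) :
    Y ε t ≤ Y ε' t := by
  have hε : 0 < ε := lt_of_lt_of_le hε' hεε
  -- rewrite the `if` as a `max`
  have hb : ∀ (δ : ℝ) (s : ℝ), (if 0 < Y δ s then Y δ s else 0) = max (Y δ s) 0 := by
    intro δ s
    by_cases h : 0 < Y δ s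
    · simp [h, max_eq_left h.le]
    · simp [h, max_eq_right (le_of_not_gt h)]
  have hYeq' : ∀ δ : ℝ, 0 < δ → ∀ u : ℝ, 0 ≤ u →
      Y δ u = Y₀ + (∫ s in (0:ℝ)..u, k / (max (Y δ s) 0 + δ))
        - a * (∫ s in (0:ℝ)..u, Y δ s) + σ * g u := by
    intro δ hδ u hu
    have := hYeq δ hδ u hu
    simpa only [hb] using this
  -- drift functions
  set b : ℝ → ℝ → ℝ := fun δ s => k / (max (Y δ s) 0 + δ) with hbdef
  have hbc : ∀ δ : ℝ, 0 < δ → Continuous (b δ) := by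
    intro δ hδ
    apply continuous_const.div (((hYc δ hδ).max continuous_const).add continuous_const)
    intro s
    have h0 : (0:ℝ) ≤ max (Y δ s) 0 := le_max_right _ _
    exact (by linarith : (0:ℝ) < max (Y δ s) 0 + δ).ne'
  set D : ℝ → ℝ := fun s => Y ε' s - Y ε s with hDdef
  have hDc : Continuous D := (hYc ε' hε').sub (hYc ε hε)
  have hD0 : D 0 = 0 := by
    have h1 := hYeq' ε hε 0 le_rfl
    have h2 := hYeq' ε' hε' 0 le_rfl
    simp only [intervalIntegral.integral_same, hg0] at h1 h2
    simp [hDdef, h1, h2]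
  by_contra hcon
  push_neg at hcon
  have hDt : D t < 0 := by simpa [hDdef] using sub_neg.mpr hcon
  -- the last time before t where D ≥ 0
  set S : Set ℝ := Icc 0 t ∩ {s | 0 ≤ D s} with hSdef
  have hScomp : IsCompact S :=
    isCompact_Icc.inter_right (isClosed_le continuous_const hDc)
  have hSne : S.Nonempty := ⟨0, ⟨le_rfl, ht⟩, by simp [hD0]⟩
  set t0 : ℝ := sSup S with ht0def
  have ht0S : t0 ∈ S := hScomp.sSup_mem hSne
  have ht0Icc : t0 ∈ Icc 0 t := ht0S.1
  have ht0D : 0 ≤ D t0 := ht0S.2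
  have ht0t : t0 < t := by
    rcases lt_or_eq_of_le ht0Icc.2 with h | h
    · exact h
    · exfalso; rw [h] at ht0D; linarith
  have hneg : ∀ s, t0 < s → s ≤ t → D s < 0 := by
    intro s hs1 hs2
    by_contra h
    push_neg at h
    have hsS : s ∈ S := ⟨⟨le_trans ht0Icc.1 hs1.le, hs2⟩, h⟩
    exact absurd (le_csSup hScomp.bddAbove hsS) (not_le.mpr hs1)
  have hDt0 : D t0 = 0 := by
    refine le_antisymm ?_ ht0D
    have hne : (𝓝[>] t0).NeBot := nhdsGT_neBot t0
    have htend : Tendsto D (𝓝[>] t0) (𝓝 (D t0)) :=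
      hDc.continuousAt.continuousWithinAt.tendsto
    refine le_of_tendsto htend ?_
    filter_upwards [Ioo_mem_nhdsGT_of_mem ⟨le_rfl, ht0t⟩] with s hs
    exact (hneg s hs.1 hs.2.le).le
  -- D ≤ 0 on [t0, t]
  have hDle : ∀ s ∈ Icc t0 t, D s ≤ 0 := by
    intro s hs
    rcases eq_or_lt_of_le hs.1 with h | h
    · rw [← h, hDt0]
    · exact (hneg s h hs.2).le
  -- split the integral equation
  have hsplit : ∀ f : ℝ → ℝ, Continuous f →
      (∫ s in (0:ℝ)..t, f s) = (∫ s in (0:ℝ)..t0, f s) + ∫ s in t0..t, f s :=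
    fun f hf => (intervalIntegral.integral_add_adjacent_intervals
      (hf.intervalIntegrable _ _) (hf.intervalIntegrable _ _)).symm
  have key : ∀ δ : ℝ, 0 < δ →
      Y δ t - Y δ t0 = (∫ s in t0..t, b δ s) - a * (∫ s in t0..t, Y δ s)
        + σ * (g t - g t0) := by
    intro δ hδ
    rw [hYeq' δ hδ t ht, hYeq' δ hδ t0 ht0Icc.1,
      hsplit _ (hbc δ hδ), hsplit _ (hYc δ hδ)]
    ring
  have e1 := key ε hε
  have e2 := key ε' hε'
  have hint1 : (∫ s in t0..t, b ε' s) - (∫ s in t0..t, b ε s)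
      = ∫ s in t0..t, (b ε' s - b ε s) :=
    (intervalIntegral.integral_sub ((hbc ε' hε').intervalIntegrable _ _)
      ((hbc ε hε).intervalIntegrable _ _)).symm
  have hint2 : (∫ s in t0..t, Y ε' s) - (∫ s in t0..t, Y ε s)
      = ∫ s in t0..t, D s :=
    (intervalIntegral.integral_sub ((hYc ε' hε').intervalIntegrable _ _)
      ((hYc ε hε).intervalIntegrable _ _)).symm
  -- nonnegativity of the two contributions
  have hbpos : 0 ≤ ∫ s in t0..t, (b ε' s - b ε s) := by
    apply intervalIntegral.integral_nonneg ht0t.le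
    intro u hu
    have hDu : D u ≤ 0 := hDle u hu
    have hYle : Y ε' u ≤ Y ε u := by simpa [hDdef, sub_nonpos] using hDu
    have hmax : max (Y ε' u) 0 ≤ max (Y ε u) 0 := max_le_max hYle le_rfl
    have hden1 : 0 < max (Y ε' u) 0 + ε' := by
      have := le_max_right (Y ε' u) 0; linarith
    have hle : max (Y ε' u) 0 + ε' ≤ max (Y ε u) 0 + ε := by linarith
    have : b ε u ≤ b ε' u := div_le_div_of_nonneg_left hk.le hden1 hle
    linarith
  have hDint : (∫ s in t0..t, D s) ≤ 0 := by
    have h : (0:ℝ) ≤ ∫ s in t0..t, -D s :=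
      intervalIntegral.integral_nonneg ht0t.le (fun u hu => by linarith [hDle u hu])
    rw [intervalIntegral.integral_neg] at h
    linarith
  -- conclusion
  have : D t = D t0 + (∫ s in t0..t, (b ε' s - b ε s)) - a * (∫ s in t0..t, D s) := by
    have : D t - D t0 = ((∫ s in t0..t, b ε' s) - ∫ s in t0..t, b ε s)
        - a * ((∫ s in t0..t, Y ε' s) - ∫ s in t0..t, Y ε s) := by
      simp only [hDdef]; linarith [e1, e2]
    rw [hint1, hint2] at this
    linarith
  nlinarith [mul_nonpos_of_nonneg_of_nonpos ha.le hDint]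

/-- Part 1 of Theorem 3: the positivity set of the limit process Y is open. -/
theorem positivity_set_isOpen
    (Y₀ k a σ : ℝ) (hY₀ : 0 < Y₀) (hk : 0 < k) (ha : 0 < a) (hσ : 0 < σ)
    (g : ℝ → ℝ) (hg : Continuous g) (hg0 : g 0 = 0)
    (Y : ℝ → ℝ → ℝ) (Ylim : ℝ → ℝ)
    (hYc : ∀ ε : ℝ, 0 < ε → Continuous (Y ε))
    (hYeq : ∀ ε : ℝ, 0 < ε → ∀ t : ℝ, 0 ≤ t →
      Y ε t = Y₀ + (∫ s in (0:ℝ)..t, k / ((if 0 < Y ε s then Y ε s else 0) + ε))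
        - a * (∫ s in (0:ℝ)..t, Y ε s) + σ * g t)
    (hlim : ∀ t : ℝ, 0 ≤ t →
      Tendsto (fun ε => Y ε t) (𝓝[>] 0) (𝓝 (Ylim t))) :
    IsOpen {t : ℝ | 0 < t ∧ 0 < Ylim t} := by
  rw [isOpen_iff_mem_nhds]
  rintro t ⟨ht, hYt⟩
  -- pick ε with Y ε t > 0
  have hev : ∀ᶠ ε in 𝓝[>] (0:ℝ), 0 < Y ε t :=
    (hlim t ht.le).eventually (eventually_gt_nhds hYt)
  obtain ⟨ε, hεt, hε0⟩ := (hev.and self_mem_nhdsWithin).exists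
  -- the open set
  set U : Set ℝ := Ioi 0 ∩ (Y ε) ⁻¹' Ioi 0 with hUdef
  have hUopen : IsOpen U := isOpen_Ioi.inter (isOpen_Ioi.preimage (hYc ε hε0))
  have htU : t ∈ U := ⟨ht, hεt⟩
  refine Filter.mem_of_superset (hUopen.mem_nhds htU) ?_
  rintro u ⟨hu, hYu⟩
  rw [Set.mem_preimage, Set.mem_Ioi] at hYu
  rw [Set.mem_Ioi] at hu
  refine ⟨hu, ?_⟩
  -- Ylim u ≥ Y ε u > 0
  have hge : Y ε u ≤ Ylim u := by
    refine ge_of_tendsto (hlim u hu.le) ?_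
    filter_upwards [Ioc_mem_nhdsGT_of_mem ⟨le_rfl, hε0⟩] with ε' hε'
    exact Y_comparison Y₀ k a σ hk ha g hg0 Y hYc hYeq hε'.1 hε'.2 hu.le
  linarith
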